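/- Let α, β > -1, set λ = α + β + 1, and let r ≥ 0 and k ≥ 1 be integers with k ≠ r. Suppose P and Q are real polynomials satisfying, for all t ∈ (-1,1), d/dt[(1-t)^{α+1}(1+t)^{β+1} P'(t)] + r(r+λ)(1-t)^α(1+t)^β P(t) = 0 and d/dt[(1-t)^{α+1}(1+t)^{β+1} Q'(t)] + k(k+λ)(1-t)^α(1+t)^β Q(t) = 0. Let ξ ∈ (-1,1) with P'(ξ) = 0. Then ∫_ξ^1 (P(t) - P(ξ)) Q(t) (1-t)^α (1+t)^β dt = (r(r+λ) P(ξ) / ((k-r)(k+r+λ))) · ∫_ξ^1 Q(t) (1-t)^α (1+t)^β dt. -/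

import Mathlib

open MeasureTheory Polynomial

/-- **Jacobi–Fourier coefficient of Yudin's truncated test function.**
If `P`, `Q` solve the Jacobi equations with parameters `r(r+λ)` and `k(k+λ)` (`k ≥ 1`,
`k ≠ r`), and `P'(ξ) = 0` for `ξ ∈ (-1,1)`, then
`∫_ξ^1 (P(t)-P(ξ)) Q(t)(1-t)^α(1+t)^β dt
  = (r(r+λ)P(ξ)/((k-r)(k+r+λ))) ∫_ξ^1 Q(t)(1-t)^α(1+t)^β dt`. -/
theorem jacobi_truncated_test_function_coefficient
    (α β : ℝ) (hα : -1 < α) (hβ : -1 < β) (lam : ℝ) (hlam : lam = α + β + 1)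
    (r k : ℕ) (hk : 1 ≤ k) (hrk : k ≠ r)
    (P Q : Polynomial ℝ)
    (hP : ∀ t ∈ Set.Ioo (-1:ℝ) 1, HasDerivAt
      (fun s : ℝ => (1 - s) ^ (α + 1) * (1 + s) ^ (β + 1) * (derivative P).eval s)
      (-((r:ℝ) * ((r:ℝ) + lam)) * (1 - t) ^ α * (1 + t) ^ β * P.eval t) t)
    (hQ : ∀ t ∈ Set.Ioo (-1:ℝ) 1, HasDerivAt
      (fun s : ℝ => (1 - s) ^ (α + 1) * (1 + s) ^ (β + 1) * (derivative Q).eval s)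
      (-((k:ℝ) * ((k:ℝ) + lam)) * (1 - t) ^ α * (1 + t) ^ β * Q.eval t) t)
    (ξ : ℝ) (hξ : ξ ∈ Set.Ioo (-1:ℝ) 1) (hPξ : (derivative P).eval ξ = 0) :
    ∫ t in ξ..1, (P.eval t - P.eval ξ) * Q.eval t * (1 - t) ^ α * (1 + t) ^ β
      = ((r:ℝ) * ((r:ℝ) + lam) * P.eval ξ / (((k:ℝ) - (r:ℝ)) * ((k:ℝ) + (r:ℝ) + lam))) *
        ∫ t in ξ..1, Q.eval t * (1 - t) ^ α * (1 + t) ^ β := by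
  obtain ⟨hξ1, hξ2⟩ := hξ
  have hk1 : (1:ℝ) ≤ (k:ℝ) := by exact_mod_cast hk
  have hr0 : (0:ℝ) ≤ (r:ℝ) := Nat.cast_nonneg r
  have hkr : (k:ℝ) ≠ (r:ℝ) := by exact_mod_cast hrk
  set μ : ℝ := (r:ℝ) * ((r:ℝ) + lam) with hμdef
  set ν : ℝ := (k:ℝ) * ((k:ℝ) + lam) with hνdef
  have hν : ν ≠ 0 := by
    have : 0 < ν := by
      apply mul_pos (by linarith) (by rw [hlam]; linarith)
    exact this.ne'
  have hdiff : ν - μ = ((k:ℝ) - (r:ℝ)) * ((k:ℝ) + (r:ℝ) + lam) := by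
    rw [hμdef, hνdef]; ring
  have hνμ : ν - μ ≠ 0 := by
    rw [hdiff]
    exact mul_ne_zero (sub_ne_zero.mpr hkr) (by rw [hlam]; nlinarith)
  -- continuity facts
  have hαβ1 : (0:ℝ) ≤ α + 1 := by linarith
  have hββ1 : (0:ℝ) ≤ β + 1 := by linarith
  have hW1c : Continuous (fun t : ℝ => (1 - t) ^ (α + 1)) :=
    (Real.continuous_rpow_const hαβ1).comp (continuous_const.sub continuous_id)
  have hW2c : Continuous (fun t : ℝ => (1 + t) ^ (β + 1)) :=
    (Real.continuous_rpow_const hββ1).comp (continuous_const.add continuous_id)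
  have hWc : Continuous (fun t : ℝ => (1 - t) ^ (α + 1) * (1 + t) ^ (β + 1)) := hW1c.mul hW2c
  -- integrability helper
  have hint : ∀ g : ℝ → ℝ, Continuous g →
      IntervalIntegrable (fun t => g t * (1 - t) ^ α * (1 + t) ^ β) volume ξ 1 := by
    intro g hg
    have base : IntervalIntegrable (fun t : ℝ => (1 - t) ^ α) volume ξ 1 := by
      have := (intervalIntegral.intervalIntegrable_rpow' (a := 1 - ξ) (b := 1 - 1) hα).comp_sub_left 1
      simpa using this
    have hcont : ContinuousOn (fun t : ℝ => g t * (1 + t) ^ β) (Set.uIcc ξ 1) := by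
      apply hg.continuousOn.mul
      intro t ht
      rw [Set.uIcc_of_le hξ2.le] at ht
      have h1t : 1 + t ≠ 0 := by have := ht.1; intro h; linarith
      exact (Real.continuousAt_rpow_const (1 + t) β (Or.inl h1t)).comp
        ((continuous_const.add continuous_id).continuousAt) |>.continuousWithinAt
    have := base.continuousOn_mul hcont
    have heq : (fun t => g t * (1 - t) ^ α * (1 + t) ^ β)
        = fun t => (g t * (1 + t) ^ β) * (1 - t) ^ α := by funext t; ring
    rw [heq]; exact this
  -- boundary limits
  have hsub : Set.Ioo ξ 1 ⊆ Set.Ioo (-1:ℝ) 1 := fun t ht => ⟨lt_trans hξ1 ht.1, ht.2⟩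
  have hWzero : ∀ g : ℝ → ℝ, Continuous g →
      Filter.Tendsto (fun s : ℝ => (1 - s) ^ (α + 1) * (1 + s) ^ (β + 1) * g s)
        (nhdsWithin 1 (Set.Iio 1)) (nhds 0) := by
    intro g hg
    have hc : Filter.Tendsto (fun s : ℝ => (1 - s) ^ (α + 1) * (1 + s) ^ (β + 1) * g s)
        (nhds 1) (nhds ((1 - 1) ^ (α + 1) * (1 + 1) ^ (β + 1) * g 1)) :=
      ((hWc.mul hg).tendsto 1)
    have : ((1:ℝ) - 1) ^ (α + 1) * ((1:ℝ) + 1) ^ (β + 1) * g 1 = 0 := by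
      rw [sub_self, Real.zero_rpow (by linarith)]; ring
    rw [this] at hc
    exact hc.mono_left nhdsWithin_le_nhds
  set c : ℝ := (1 - ξ) ^ (α + 1) * (1 + ξ) ^ (β + 1) * (derivative Q).eval ξ with hcdef
  set A : ℝ := ∫ t in ξ..1, P.eval t * Q.eval t * (1 - t) ^ α * (1 + t) ^ β with hAdef
  set B : ℝ := ∫ t in ξ..1, Q.eval t * (1 - t) ^ α * (1 + t) ^ β with hBdef
  -- second FTC: ν * B = c
  have key2 : ν * B = c := by
    have hderiv : ∀ t ∈ Set.Ioo ξ 1, HasDerivAt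
        (fun s : ℝ => (1 - s) ^ (α + 1) * (1 + s) ^ (β + 1) * (derivative Q).eval s)
        ((-ν * Q.eval t) * (1 - t) ^ α * (1 + t) ^ β) t := by
      intro t ht
      have := hQ t (hsub ht)
      convert this using 1
      ring
    have hii : IntervalIntegrable (fun t => (-ν * Q.eval t) * (1 - t) ^ α * (1 + t) ^ β)
        volume ξ 1 := hint _ (continuous_const.mul Q.continuous)
    have hta : Filter.Tendsto
        (fun s : ℝ => (1 - s) ^ (α + 1) * (1 + s) ^ (β + 1) * (derivative Q).eval s)
        (nhdsWithin ξ (Set.Ioi ξ)) (nhds c) := by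
      exact ((hWc.mul (derivative Q).continuous).tendsto ξ).mono_left nhdsWithin_le_nhds
    have := intervalIntegral.integral_eq_sub_of_hasDerivAt_of_tendsto hξ2 hderiv hii hta
      (hWzero _ (derivative Q).continuous)
    have heq : (fun t => (-ν * Q.eval t) * (1 - t) ^ α * (1 + t) ^ β)
        = fun t => (-ν) * (Q.eval t * (1 - t) ^ α * (1 + t) ^ β) := by funext t; ring
    rw [heq, intervalIntegral.integral_const_mul] at this
    rw [hBdef]
    linarith [this]
  -- first FTC: (ν - μ) * A = P.eval ξ * c
  have key1 : (ν - μ) * A = P.eval ξ * c := by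
    have hderiv : ∀ t ∈ Set.Ioo ξ 1, HasDerivAt
        (fun s : ℝ => ((1 - s) ^ (α + 1) * (1 + s) ^ (β + 1) * (derivative P).eval s) * Q.eval s
          - ((1 - s) ^ (α + 1) * (1 + s) ^ (β + 1) * (derivative Q).eval s) * P.eval s)
        (((ν - μ) * (P.eval t * Q.eval t)) * (1 - t) ^ α * (1 + t) ^ β) t := by
      intro t ht
      have h1 := (hP t (hsub ht)).mul (d := fun s => Q.eval s) (Q.hasDerivAt t)
      have h2 := (hQ t (hsub ht)).mul (d := fun s => P.eval s) (P.hasDerivAt t)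
      have := h1.sub h2
      convert this using 1
      case e'_9 => ring
      all_goals rfl
    have hii : IntervalIntegrable
        (fun t => ((ν - μ) * (P.eval t * Q.eval t)) * (1 - t) ^ α * (1 + t) ^ β)
        volume ξ 1 := hint _ (continuous_const.mul (P.continuous.mul Q.continuous))
    have hpc : Continuous fun s : ℝ => (derivative P).eval s := (derivative P).continuous
    have hqc : Continuous fun s : ℝ => (derivative Q).eval s := (derivative Q).continuous
    have hGc : Continuous
        (fun s : ℝ => ((1 - s) ^ (α + 1) * (1 + s) ^ (β + 1) * (derivative P).eval s) * Q.eval s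
          - ((1 - s) ^ (α + 1) * (1 + s) ^ (β + 1) * (derivative Q).eval s) * P.eval s) := by
      exact ((hWc.mul hpc).mul Q.continuous).sub ((hWc.mul hqc).mul P.continuous)
    have hta : Filter.Tendsto _ (nhdsWithin ξ (Set.Ioi ξ))
        (nhds (((1 - ξ) ^ (α + 1) * (1 + ξ) ^ (β + 1) * (derivative P).eval ξ) * Q.eval ξ
          - ((1 - ξ) ^ (α + 1) * (1 + ξ) ^ (β + 1) * (derivative Q).eval ξ) * P.eval ξ)) :=
      (hGc.tendsto ξ).mono_left nhdsWithin_le_nhds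
    have htb : Filter.Tendsto
        (fun s : ℝ => ((1 - s) ^ (α + 1) * (1 + s) ^ (β + 1) * (derivative P).eval s) * Q.eval s
          - ((1 - s) ^ (α + 1) * (1 + s) ^ (β + 1) * (derivative Q).eval s) * P.eval s)
        (nhdsWithin 1 (Set.Iio 1)) (nhds 0) := by
      have h1 := hWzero (fun s => (derivative P).eval s * Q.eval s) (hpc.mul Q.continuous)
      have h2 := hWzero (fun s => (derivative Q).eval s * P.eval s) (hqc.mul P.continuous)
      have := h1.sub h2
      rw [sub_zero] at this
      convert this using 2 with s
      ring
    have := intervalIntegral.integral_eq_sub_of_hasDerivAt_of_tendsto hξ2 hderiv hii hta htb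
    rw [hPξ] at this
    have heq : (fun t => ((ν - μ) * (P.eval t * Q.eval t)) * (1 - t) ^ α * (1 + t) ^ β)
        = fun t => (ν - μ) * (P.eval t * Q.eval t * (1 - t) ^ α * (1 + t) ^ β) := by
      funext t; ring
    rw [heq, intervalIntegral.integral_const_mul] at this
    rw [hAdef, hcdef]
    rw [this]; ring
  -- split the LHS
  have hsplit : ∫ t in ξ..1, (P.eval t - P.eval ξ) * Q.eval t * (1 - t) ^ α * (1 + t) ^ β
      = A - P.eval ξ * B := by
    have h1 : IntervalIntegrable (fun t => P.eval t * Q.eval t * (1 - t) ^ α * (1 + t) ^ β)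
        volume ξ 1 := by
      exact hint (fun t => P.eval t * Q.eval t) (P.continuous.mul Q.continuous)
    have h2 : IntervalIntegrable (fun t => P.eval ξ * Q.eval t * (1 - t) ^ α * (1 + t) ^ β)
        volume ξ 1 := by
      exact hint (fun t => P.eval ξ * Q.eval t) (continuous_const.mul Q.continuous)
    have heq : (fun t => (P.eval t - P.eval ξ) * Q.eval t * (1 - t) ^ α * (1 + t) ^ β)
        = fun t => P.eval t * Q.eval t * (1 - t) ^ α * (1 + t) ^ β
          - P.eval ξ * Q.eval t * (1 - t) ^ α * (1 + t) ^ β := by funext t; ring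
    rw [heq, intervalIntegral.integral_sub h1 h2]
    have heq2 : (fun t => P.eval ξ * Q.eval t * (1 - t) ^ α * (1 + t) ^ β)
        = fun t => P.eval ξ * (Q.eval t * (1 - t) ^ α * (1 + t) ^ β) := by funext t; ring
    rw [heq2, intervalIntegral.integral_const_mul]
  rw [hsplit, ← hdiff]
  have hA : A = P.eval ξ * c / (ν - μ) := by field_simp; linarith [key1]
  have hB : B = c / ν := by field_simp; linarith [key2]
  rw [hA, hB]
  have : μ = ν - (ν - μ) := by ring
  field_simp
  ring
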